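/- Let A be a cDFA over alphabet Σ with state set Q, start state q0 and transition function δ, and let D₁,…,Dₙ ⊆ Σ be nonempty finite domains. Fix i ∈ [1,n] and ℓ ∈ Dᵢ. For every domain-consistent string σ of length n with σᵢ = ℓ, letting q = run(q0, σ₁⋯σ_{i−1}) and δ(q,ℓ) = (q′,inc), the total cost satisfies preMin(i−1,q) + inc + sufMin(i+1,q′) ≤ cost(q0,σ) ≤ preMax(i−1,q) + inc + sufMax(i+1,q′). Consequently, if for every state q ∈ Q with preMin(i−1,q) ≠ ∞ the interval [preMin(i−1,q)+inc+sufMin(i+1,q′), preMax(i−1,q)+inc+sufMax(i+1,q′)] (with δ(q,ℓ) = (q′,inc)) is disjoint from a finite set D_N ⊆ ℕ, then no domain-consistent σ with σᵢ = ℓ has cost(q0,σ) ∈ D_N; i.e., the pruning rule of the incomplete cAutomaton propagator is sound. -/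

import Mathlib

/-- A counter-DFA over state type `Q` and alphabet `σ`: a start state and a total
transition function returning the successor state and the counter increment. -/
structure CDFA (Q : Type*) (σ : Type*) where
  q0 : Q
  δ : Q → σ → Q × ℕ

namespace CDFA

variable {Q σ : Type*}

/-- The state reached from `q` after consuming a string. -/
def run (A : CDFA Q σ) : Q → List σ → Q
  | q, [] => q
  | q, ℓ :: w => A.run (A.δ q ℓ).1 w

/-- The total counter increase from state `q` upon consuming a string. -/
def cost (A : CDFA Q σ) : Q → List σ → ℕ
  | _, [] => 0
  | q, ℓ :: w => (A.δ q ℓ).2 + A.cost (A.δ q ℓ).1 w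

end CDFA

namespace CDFA

variable {Q σ : Type*}

/-- `preMin A D i hi q` : the minimum cost (in `ℕ ∪ {∞}`) of a domain-consistent
prefix string of length `i` leading from the start state to state `q`
(`∞` if no such string reaches `q`). -/
noncomputable def preMin (A : CDFA Q σ) {n : ℕ} (D : Fin n → Finset σ)
    (i : ℕ) (hi : i ≤ n) (q : Q) : ℕ∞ :=
  sInf {c : ℕ∞ | ∃ s : Fin i → σ, (∀ j, s j ∈ D (Fin.castLE hi j)) ∧
    A.run A.q0 (List.ofFn s) = q ∧ (A.cost A.q0 (List.ofFn s) : ℕ∞) = c}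

/-- `preMax A D i hi q` : the maximum cost (in `ℕ ∪ {−∞}`) of a domain-consistent
prefix string of length `i` leading from the start state to state `q`
(`−∞` if no such string reaches `q`). -/
noncomputable def preMax (A : CDFA Q σ) {n : ℕ} (D : Fin n → Finset σ)
    (i : ℕ) (hi : i ≤ n) (q : Q) : WithBot ℕ :=
  sSup {c : WithBot ℕ | ∃ s : Fin i → σ, (∀ j, s j ∈ D (Fin.castLE hi j)) ∧
    A.run A.q0 (List.ofFn s) = q ∧ (A.cost A.q0 (List.ofFn s) : WithBot ℕ) = c}

/-- `sufMin A D i q` : the minimum cost of a domain-consistent suffix string for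
positions `i, …, n−1` (0-based), starting from state `q`. -/
noncomputable def sufMin (A : CDFA Q σ) {n : ℕ} (D : Fin n → Finset σ)
    (i : ℕ) (q : Q) : ℕ :=
  sInf {c : ℕ | ∃ s : Fin (n - i) → σ,
    (∀ j : Fin (n - i), s j ∈ D ⟨i + j.val, by have := j.isLt; omega⟩) ∧
    A.cost q (List.ofFn s) = c}

/-- `sufMax A D i q` : the maximum cost of a domain-consistent suffix string for
positions `i, …, n−1` (0-based), starting from state `q`. -/
noncomputable def sufMax (A : CDFA Q σ) {n : ℕ} (D : Fin n → Finset σ)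
    (i : ℕ) (q : Q) : ℕ :=
  sSup {c : ℕ | ∃ s : Fin (n - i) → σ,
    (∀ j : Fin (n - i), s j ∈ D ⟨i + j.val, by have := j.isLt; omega⟩) ∧
    A.cost q (List.ofFn s) = c}

end CDFA

namespace CDFA
variable {Q σ : Type*}

lemma run_append (A : CDFA Q σ) (q : Q) (u v : List σ) :
    A.run q (u ++ v) = A.run (A.run q u) v := by
  induction u generalizing q with
  | nil => rfl
  | cons a u ih => simp [run, ih]

lemma cost_append (A : CDFA Q σ) (q : Q) (u v : List σ) :
    A.cost q (u ++ v) = A.cost q u + A.cost (A.run q u) v := by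
  induction u generalizing q with
  | nil => simp [cost, run]
  | cons a u ih => simp [cost, run, ih]; ring

lemma ofFn_split {n : ℕ} (s : Fin n → σ) (i : Fin n) :
    List.ofFn s =
      (List.ofFn fun j : Fin i.val => s (Fin.castLE i.isLt.le j)) ++
        s i :: (List.ofFn fun j : Fin (n - (i.val + 1)) =>
          s ⟨i.val + 1 + j.val, by have := j.isLt; omega⟩) := by
  apply List.ext_getElem
  · simp; omega
  · intro k h1 h2
    simp only [List.getElem_ofFn, List.getElem_append, List.getElem_cons,
      List.length_ofFn]
    simp only [List.length_ofFn, List.length_append, List.length_cons] at h2 ⊢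
    split_ifs with h h'
    · congr 1
    · congr 1; apply Fin.ext; simp; omega
    · congr 1; apply Fin.ext; simp; omega

end CDFA

/-- Soundness of the pruning rule of the incomplete `cAutomaton` propagator: the cost
of any domain-consistent string whose `i`-th symbol is `ℓ` lies in the interval
`[preMin(i−1,q) + inc + sufMin(i+1,q′), preMax(i−1,q) + inc + sufMax(i+1,q′)]` where
`q` is the state reached on its prefix and `δ(q,ℓ) = (q′,inc)`; consequently, if for
every state `q` with `preMin(i−1,q) ≠ ∞` this interval is disjoint from `D_N`, then no
such string has its cost in `D_N`. -/
theorem cAutomaton_pruning_sound {Q σ : Type*} [Fintype Q] [Fintype σ]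
    (A : CDFA Q σ) {n : ℕ} (D : Fin n → Finset σ) (hD : ∀ j, (D j).Nonempty)
    (DN : Finset ℕ) (i : Fin n) (ℓ : σ) (hℓ : ℓ ∈ D i) :
    (∀ s : Fin n → σ, (∀ j, s j ∈ D j) → s i = ℓ →
      ∀ q : Q, A.run A.q0 (List.ofFn fun j : Fin i.val => s (Fin.castLE i.isLt.le j)) = q →
        A.preMin D i.val i.isLt.le q + ((A.δ q ℓ).2 : ℕ∞) +
            (A.sufMin D (i.val + 1) (A.δ q ℓ).1 : ℕ∞) ≤ (A.cost A.q0 (List.ofFn s) : ℕ∞) ∧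
        ((A.cost A.q0 (List.ofFn s) : ℕ) : WithBot ℕ) ≤
          A.preMax D i.val i.isLt.le q + ((A.δ q ℓ).2 : WithBot ℕ) +
            (A.sufMax D (i.val + 1) (A.δ q ℓ).1 : WithBot ℕ)) ∧
    ((∀ q : Q, A.preMin D i.val i.isLt.le q ≠ ⊤ →
        ∀ v ∈ DN,
          ¬ (A.preMin D i.val i.isLt.le q + ((A.δ q ℓ).2 : ℕ∞) +
                (A.sufMin D (i.val + 1) (A.δ q ℓ).1 : ℕ∞) ≤ (v : ℕ∞) ∧
             ((v : ℕ) : WithBot ℕ) ≤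
               A.preMax D i.val i.isLt.le q + ((A.δ q ℓ).2 : WithBot ℕ) +
                 (A.sufMax D (i.val + 1) (A.δ q ℓ).1 : WithBot ℕ))) →
      ∀ s : Fin n → σ, (∀ j, s j ∈ D j) → s i = ℓ →
        A.cost A.q0 (List.ofFn s) ∉ DN) := by
  have main : ∀ s : Fin n → σ, (∀ j, s j ∈ D j) → s i = ℓ →
      ∀ q : Q, A.run A.q0 (List.ofFn fun j : Fin i.val => s (Fin.castLE i.isLt.le j)) = q →
        A.preMin D i.val i.isLt.le q + ((A.δ q ℓ).2 : ℕ∞) +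
            (A.sufMin D (i.val + 1) (A.δ q ℓ).1 : ℕ∞) ≤ (A.cost A.q0 (List.ofFn s) : ℕ∞) ∧
        ((A.cost A.q0 (List.ofFn s) : ℕ) : WithBot ℕ) ≤
          A.preMax D i.val i.isLt.le q + ((A.δ q ℓ).2 : WithBot ℕ) +
            (A.sufMax D (i.val + 1) (A.δ q ℓ).1 : WithBot ℕ) := by
    intro s hs hsi q hq
    set pf : Fin i.val → σ := fun j => s (Fin.castLE i.isLt.le j) with hpf
    set sf : Fin (n - (i.val + 1)) → σ :=
      fun j => s ⟨i.val + 1 + j.val, by have := j.isLt; omega⟩ with hsf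
    have hsplit : List.ofFn s = (List.ofFn pf) ++ s i :: (List.ofFn sf) :=
      CDFA.ofFn_split s i
    have hcost : A.cost A.q0 (List.ofFn s) =
        A.cost A.q0 (List.ofFn pf) + ((A.δ q ℓ).2 +
          A.cost (A.δ q ℓ).1 (List.ofFn sf)) := by
      rw [hsplit, CDFA.cost_append, hq, hsi]
      rfl
    -- prefix memberships
    have hpre_mem : (A.cost A.q0 (List.ofFn pf) : ℕ∞) ∈
        {c : ℕ∞ | ∃ s' : Fin i.val → σ, (∀ j, s' j ∈ D (Fin.castLE i.isLt.le j)) ∧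
          A.run A.q0 (List.ofFn s') = q ∧ (A.cost A.q0 (List.ofFn s') : ℕ∞) = c} :=
      ⟨pf, fun j => hs _, hq, rfl⟩
    have hpreMin : A.preMin D i.val i.isLt.le q ≤ (A.cost A.q0 (List.ofFn pf) : ℕ∞) :=
      sInf_le hpre_mem
    have hpreMax : (A.cost A.q0 (List.ofFn pf) : WithBot ℕ) ≤
        A.preMax D i.val i.isLt.le q := by
      apply le_csSup
      · apply Set.Finite.bddAbove
        apply Set.Finite.subset (Set.finite_range
          (fun s' : Fin i.val → σ => (A.cost A.q0 (List.ofFn s') : WithBot ℕ)))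
        rintro c ⟨s', -, -, rfl⟩
        exact ⟨s', rfl⟩
      · exact ⟨pf, fun j => hs _, hq, rfl⟩
    have hsufMin : A.sufMin D (i.val + 1) (A.δ q ℓ).1 ≤
        A.cost (A.δ q ℓ).1 (List.ofFn sf) :=
      Nat.sInf_le ⟨sf, fun j => hs _, rfl⟩
    have hsufMax : A.cost (A.δ q ℓ).1 (List.ofFn sf) ≤
        A.sufMax D (i.val + 1) (A.δ q ℓ).1 := by
      apply le_csSup
      · apply Set.Finite.bddAbove
        apply Set.Finite.subset (Set.finite_range
          (fun s' : Fin (n - (i.val + 1)) → σ => A.cost (A.δ q ℓ).1 (List.ofFn s')))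
        rintro c ⟨s', -, rfl⟩
        exact ⟨s', rfl⟩
      · exact ⟨sf, fun j => hs _, rfl⟩
    constructor
    · rw [hcost]
      push_cast
      rw [← add_assoc]
      exact add_le_add (add_le_add hpreMin le_rfl) (by exact_mod_cast hsufMin)
    · rw [hcost]
      push_cast
      rw [← add_assoc]
      exact add_le_add (add_le_add hpreMax le_rfl) (by exact_mod_cast hsufMax)
  refine ⟨main, ?_⟩
  intro H s hs hsi hmem
  set q := A.run A.q0 (List.ofFn fun j : Fin i.val => s (Fin.castLE i.isLt.le j)) with hq
  have hne : A.preMin D i.val i.isLt.le q ≠ ⊤ := by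
    have hle : A.preMin D i.val i.isLt.le q ≤
        ((A.cost A.q0 (List.ofFn fun j : Fin i.val => s (Fin.castLE i.isLt.le j))) : ℕ∞) :=
      sInf_le ⟨_, fun j => hs _, rfl, rfl⟩
    exact ne_top_of_le_ne_top (ENat.coe_ne_top _) hle
  have := main s hs hsi q rfl
  exact H q hne _ hmem ⟨this.1, this.2⟩
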